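/- For the linear RNN memory function ρ̂(s) = cᵀ e^{Ws} U with W a real m×m matrix whose eigenvalues all have real part ≤ -λ < 0, there exists a constant C > 0 such that |ρ̂(s)| ≤ C e^{-λ s/2} for all s ≥ 0; consequently, for ρ(s) = 1/(1+s)^p with p > 1, sup_{s ≥ 0} e^{λ s/4} |ρ(s) - ρ̂(s)| = ∞ unless ρ ≡ ρ̂, i.e., linear RNNs cannot match polynomial memory uniformly in exponentially weighted norm. -/

import Mathlib

open MeasureTheory

open scoped Nat

section Aux

/-- Decay of `exp (s • T) v` for an operator whose eigenvalues have real part `≤ -lam`. -/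
lemma exp_decay_vec {E : Type*} [NormedAddCommGroup E] [NormedSpace ℂ E]
    [FiniteDimensional ℂ E]
    (T : E →L[ℂ] E) (lam : ℝ) (hlam : 0 < lam)
    (hspec : ∀ μ : ℂ, Module.End.HasEigenvalue (T : E →ₗ[ℂ] E) μ → μ.re ≤ -lam)
    (v : E) :
    ∃ C : ℝ, 0 < C ∧ ∀ s : ℝ, 0 ≤ s →
      ‖NormedSpace.exp (s • T) v‖ ≤ C * Real.exp (-lam * s / 2) := by
  letI : NormedAlgebra ℚ (E →L[ℂ] E) := .restrictScalars ℚ ℂ _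
  set f : Module.End ℂ E := (T : E →ₗ[ℂ] E) with hf
  have hv : v ∈ ⨆ μ : ℂ, Module.End.maxGenEigenspace f μ := by
    rw [Module.End.iSup_maxGenEigenspace_eq_top]; trivial
  refine Submodule.iSup_induction (motive := fun v : E => ∃ C : ℝ, 0 < C ∧ ∀ s : ℝ, 0 ≤ s →
      ‖NormedSpace.exp (s • T) v‖ ≤ C * Real.exp (-lam * s / 2)) _ hv ?_ ?_ ?_
  · -- generalized eigenvector case
    intro μ x hx
    rcases eq_or_ne x 0 with rfl | hx0
    · exact ⟨1, one_pos, fun s hs => by simp [(Real.exp_pos _).le]⟩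
    obtain ⟨k, hk⟩ := (Module.End.mem_maxGenEigenspace _ _ _).mp hx
    set N : E →L[ℂ] E := T - μ • (1 : E →L[ℂ] E) with hN
    have hcoe : (ContinuousLinearMap.toLinearMapRingHom (R₁ := ℂ) (M₁ := E) N)
        = f - μ • (1 : Module.End ℂ E) := by
      ext w
      simp [ContinuousLinearMap.toLinearMapRingHom, hN, hf]
      rfl
    have hNk : (N ^ k) x = 0 := by
      have h1 : ((ContinuousLinearMap.toLinearMapRingHom (R₁ := ℂ) (M₁ := E) N) ^ k) x = 0 := by
        rw [hcoe]; exact hk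
      rw [← map_pow] at h1
      exact h1
    have hμ : μ.re ≤ -lam := by
      apply hspec
      apply Module.End.hasEigenvalue_of_hasGenEigenvalue (k := k)
      rw [Module.End.HasGenEigenvalue, Module.End.HasUnifEigenvalue, Submodule.ne_bot_iff]
      refine ⟨x, ?_, hx0⟩
      rw [Module.End.mem_genEigenspace_nat, LinearMap.mem_ker, ← hcoe, ← map_pow]
      exact hNk
    set K : ℝ := ∑ n ∈ Finset.range k, (2 / lam) ^ n * ‖(N ^ n) x‖ with hKdef
    have hKnn : 0 ≤ K := Finset.sum_nonneg fun n _ => by positivity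
    refine ⟨K + 1, by positivity, fun s hs => ?_⟩
    have hsplit : s • T = ((s : ℂ) * μ) • (1 : E →L[ℂ] E) + (s : ℂ) • N := by
      rw [mul_smul, ← smul_add]
      have : μ • (1 : E →L[ℂ] E) + N = T := by rw [hN]; abel
      rw [this, Complex.coe_smul]
    have hc : Commute (((s : ℂ) * μ) • (1 : E →L[ℂ] E)) ((s : ℂ) • N) :=
      ((Commute.one_left N).smul_left _).smul_right _
    have he1 : NormedSpace.exp (((s : ℂ) * μ) • (1 : E →L[ℂ] E))
        = Complex.exp ((s : ℂ) * μ) • (1 : E →L[ℂ] E) := by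
      rw [← Algebra.algebraMap_eq_smul_one, ← NormedSpace.algebraMap_exp_comm,
        ← Complex.exp_eq_exp_ℂ, Algebra.algebraMap_eq_smul_one]
    have happ : NormedSpace.exp (s • T) x
        = Complex.exp ((s : ℂ) * μ) • (NormedSpace.exp ((s : ℂ) • N) x) := by
      rw [hsplit, NormedSpace.exp_add_of_commute hc, he1]
      simp [ContinuousLinearMap.mul_apply]
    -- finite sum expression for exp of (quasi)nilpotent part applied to x
    have hNsum : NormedSpace.exp ((s : ℂ) • N) x
        = ∑ n ∈ Finset.range k, ((n !⁻¹ : ℂ) • ((s : ℂ) • N) ^ n) x := by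
      rw [NormedSpace.exp_eq_tsum ℂ]
      have hsum : Summable (fun n : ℕ => (n !⁻¹ : ℂ) • ((s : ℂ) • N) ^ n) :=
        NormedSpace.expSeries_summable' _
      have h3 := (ContinuousLinearMap.apply ℂ E x).map_tsum hsum
      simp only [ContinuousLinearMap.apply_apply] at h3
      rw [h3]
      refine tsum_eq_sum ?_
      intro n hn
      have hkn : k ≤ n := by simpa using hn
      have hzero : (N ^ n) x = 0 := by
        rw [← Nat.sub_add_cancel hkn, pow_add, ContinuousLinearMap.mul_apply, hNk, map_zero]
      rw [smul_pow]
      simp [hzero]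
    have hterm : ∀ n ∈ Finset.range k,
        ‖((n !⁻¹ : ℂ) • ((s : ℂ) • N) ^ n) x‖
          ≤ Real.exp (lam * s / 2) * ((2 / lam) ^ n * ‖(N ^ n) x‖) := by
      intro n _
      have hnorm : ‖((n !⁻¹ : ℂ) • ((s : ℂ) • N) ^ n) x‖
          = (n ! : ℝ)⁻¹ * s ^ n * ‖(N ^ n) x‖ := by
        rw [smul_pow]
        simp only [ContinuousLinearMap.smul_apply, norm_smul, smul_smul]
        rw [norm_mul, norm_inv, norm_pow]
        simp [Complex.norm_natCast, Complex.norm_real, abs_of_nonneg hs, mul_assoc]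
      rw [hnorm]
      have hexp := Real.pow_div_factorial_le_exp (x := lam * s / 2) (by positivity) n
      have hfac : s ^ n / n ! ≤ Real.exp (lam * s / 2) * (2 / lam) ^ n := by
        have hpos : (0 : ℝ) < (lam / 2) ^ n := by positivity
        have e1 : (2 / lam) ^ n = ((lam / 2) ^ n)⁻¹ := by
          rw [← inv_pow, inv_div]
        rw [e1, ← div_eq_mul_inv, le_div_iff₀ hpos]
        calc s ^ n / n ! * (lam / 2) ^ n = (lam * s / 2) ^ n / n ! := by
              rw [show lam * s / 2 = s * (lam / 2) by ring, mul_pow]; ring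
          _ ≤ Real.exp (lam * s / 2) := hexp
      calc (n ! : ℝ)⁻¹ * s ^ n * ‖(N ^ n) x‖ = (s ^ n / n !) * ‖(N ^ n) x‖ := by
            rw [div_eq_mul_inv]; ring
        _ ≤ (Real.exp (lam * s / 2) * (2 / lam) ^ n) * ‖(N ^ n) x‖ := by
            exact mul_le_mul_of_nonneg_right hfac (norm_nonneg _)
        _ = Real.exp (lam * s / 2) * ((2 / lam) ^ n * ‖(N ^ n) x‖) := by ring
    have hNbound : ‖NormedSpace.exp ((s : ℂ) • N) x‖ ≤ Real.exp (lam * s / 2) * K := by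
      rw [hNsum]
      calc ‖∑ n ∈ Finset.range k, ((n !⁻¹ : ℂ) • ((s : ℂ) • N) ^ n) x‖
          ≤ ∑ n ∈ Finset.range k, ‖((n !⁻¹ : ℂ) • ((s : ℂ) • N) ^ n) x‖ :=
            norm_sum_le _ _
        _ ≤ ∑ n ∈ Finset.range k, Real.exp (lam * s / 2) * ((2 / lam) ^ n * ‖(N ^ n) x‖) :=
            Finset.sum_le_sum hterm
        _ = Real.exp (lam * s / 2) * K := by rw [hKdef, Finset.mul_sum]
    have hznorm : ‖Complex.exp ((s : ℂ) * μ)‖ = Real.exp (s * μ.re) := by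
      rw [Complex.norm_exp]
      congr 1
      simp [Complex.mul_re]
    calc ‖NormedSpace.exp (s • T) x‖
        = Real.exp (s * μ.re) * ‖NormedSpace.exp ((s : ℂ) • N) x‖ := by
          rw [happ, norm_smul, hznorm]
      _ ≤ Real.exp (-lam * s) * (Real.exp (lam * s / 2) * K) := by
          apply mul_le_mul
          · rw [Real.exp_le_exp]
            calc s * μ.re ≤ s * (-lam) := mul_le_mul_of_nonneg_left hμ hs
              _ = -lam * s := by ring
          · exact hNbound
          · exact norm_nonneg _
          · exact (Real.exp_pos _).le
      _ = K * Real.exp (-lam * s / 2) := by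
          rw [← mul_assoc, ← Real.exp_add]; ring_nf
      _ ≤ (K + 1) * Real.exp (-lam * s / 2) := by
          have := (Real.exp_pos (-lam * s / 2)).le
          nlinarith
  · exact ⟨1, one_pos, fun s hs => by simp [(Real.exp_pos _).le]⟩
  · rintro x y ⟨C₁, hC₁, h₁⟩ ⟨C₂, hC₂, h₂⟩
    refine ⟨C₁ + C₂, by positivity, fun s hs => ?_⟩
    calc ‖NormedSpace.exp (s • T) (x + y)‖
        = ‖NormedSpace.exp (s • T) x + NormedSpace.exp (s • T) y‖ := by rw [map_add]
      _ ≤ ‖NormedSpace.exp (s • T) x‖ + ‖NormedSpace.exp (s • T) y‖ := norm_add_le _ _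
      _ ≤ C₁ * Real.exp (-lam * s / 2) + C₂ * Real.exp (-lam * s / 2) :=
          add_le_add (h₁ s hs) (h₂ s hs)
      _ = (C₁ + C₂) * Real.exp (-lam * s / 2) := by ring

/-- Matrices acting on `Fin m → ℂ` as continuous linear maps, as an algebra hom. -/
noncomputable def matCLM (m : ℕ) :
    Matrix (Fin m) (Fin m) ℂ →ₐ[ℂ] ((Fin m → ℂ) →L[ℂ] (Fin m → ℂ)) where
  toFun M := LinearMap.toContinuousLinearMap (Matrix.mulVecLin M)
  map_one' := by
    ext v i
    simp [LinearMap.coe_toContinuousLinearMap', Matrix.mulVecLin_apply, Matrix.one_mulVec]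
  map_mul' M N := by
    ext v i
    simp [LinearMap.coe_toContinuousLinearMap', Matrix.mulVecLin_apply,
      Matrix.mulVec_mulVec]
  map_zero' := by
    ext v i
    rw [LinearMap.coe_toContinuousLinearMap']
    simp [Matrix.mulVecLin_apply, Matrix.zero_mulVec]
  map_add' M N := by
    ext v i
    simp [LinearMap.coe_toContinuousLinearMap', Matrix.mulVecLin_apply, Matrix.add_mulVec]
  commutes' z := by
    ext v i
    simp [LinearMap.coe_toContinuousLinearMap', Matrix.mulVecLin_apply,
      Algebra.algebraMap_eq_smul_one, Matrix.smul_mulVec, Matrix.one_mulVec]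

lemma matCLM_apply (m : ℕ) (M : Matrix (Fin m) (Fin m) ℂ) (v : Fin m → ℂ) :
    matCLM m M v = M.mulVec v := by
  simp [matCLM, LinearMap.coe_toContinuousLinearMap', Matrix.mulVecLin_apply]

end Aux

lemma matrix_exp_entry_decay (m : ℕ) (A : Matrix (Fin m) (Fin m) ℂ) (lam : ℝ) (hlam : 0 < lam)
    (hspec : ∀ μ : ℂ, μ ∈ spectrum ℂ A → μ.re ≤ -lam) :
    ∃ C : ℝ, 0 < C ∧ ∀ s : ℝ, 0 ≤ s → ∀ i j,
      ‖(NormedSpace.exp (s • A)) i j‖ ≤ C * Real.exp (-lam * s / 2) := by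
  letI : SeminormedRing (Matrix (Fin m) (Fin m) ℂ) := Matrix.linftyOpSemiNormedRing
  letI : NormedRing (Matrix (Fin m) (Fin m) ℂ) := Matrix.linftyOpNormedRing
  letI : NormedAlgebra ℝ (Matrix (Fin m) (Fin m) ℂ) := Matrix.linftyOpNormedAlgebra
  letI : NormedAlgebra ℚ (Matrix (Fin m) (Fin m) ℂ) := .restrictScalars ℚ ℝ _
  have hΦc : Continuous (matCLM m) :=
    LinearMap.continuous_of_finiteDimensional (matCLM m).toLinearMap
  set T := matCLM m A with hT
  have hspecT : ∀ μ : ℂ,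
      Module.End.HasEigenvalue (T : (Fin m → ℂ) →ₗ[ℂ] (Fin m → ℂ)) μ → μ.re ≤ -lam := by
    intro μ hμ
    apply hspec
    have h1 : (T : (Fin m → ℂ) →ₗ[ℂ] (Fin m → ℂ)) = Matrix.toLinAlgEquiv' A := by
      apply LinearMap.ext
      intro v
      rw [ContinuousLinearMap.coe_coe, hT, matCLM_apply, Matrix.toLinAlgEquiv'_apply]
    rw [h1] at hμ
    have h2 := Module.End.hasEigenvalue_iff_mem_spectrum.mp hμ
    rwa [AlgEquiv.spectrum_eq Matrix.toLinAlgEquiv' A] at h2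
  choose Cv hCvpos hCv using fun j : Fin m =>
    exp_decay_vec T lam hlam hspecT (Pi.single j (1 : ℂ))
  refine ⟨(∑ j, Cv j) + 1,
    add_pos_of_nonneg_of_pos (Finset.sum_nonneg fun j _ => (hCvpos j).le) one_pos,
    fun s hs i j => ?_⟩
  have hmap : matCLM m (NormedSpace.exp (s • A)) = NormedSpace.exp (s • T) := by
    erw [NormedSpace.map_exp (matCLM m) hΦc]
    congr 1
    rw [← Complex.coe_smul, _root_.map_smul, ← Complex.coe_algebraMap]
    exact algebraMap_smul ℂ s T
  have hentry : (NormedSpace.exp (s • A)) i j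
      = (NormedSpace.exp (s • T) (Pi.single j (1 : ℂ))) i := by
    rw [← hmap, matCLM_apply]
    simp
  rw [hentry]
  calc ‖(NormedSpace.exp (s • T) (Pi.single j (1 : ℂ))) i‖
      ≤ ‖NormedSpace.exp (s • T) (Pi.single j (1 : ℂ))‖ :=
        norm_le_pi_norm _ i
    _ ≤ Cv j * Real.exp (-lam * s / 2) := hCv j s hs
    _ ≤ ((∑ j, Cv j) + 1) * Real.exp (-lam * s / 2) := by
        have h1 : Cv j ≤ ∑ j, Cv j :=
          Finset.single_le_sum (fun j _ => (hCvpos j).le) (Finset.mem_univ j)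
        have := (Real.exp_pos (-lam * s / 2)).le
        nlinarith

lemma exp_map_ofReal (m : ℕ) (M : Matrix (Fin m) (Fin m) ℝ) :
    (NormedSpace.exp M).map Complex.ofReal = NormedSpace.exp (M.map Complex.ofReal) := by
  letI : SeminormedRing (Matrix (Fin m) (Fin m) ℝ) := Matrix.linftyOpSemiNormedRing
  letI : NormedRing (Matrix (Fin m) (Fin m) ℝ) := Matrix.linftyOpNormedRing
  letI : NormedAlgebra ℝ (Matrix (Fin m) (Fin m) ℝ) := Matrix.linftyOpNormedAlgebra
  letI : NormedAlgebra ℚ (Matrix (Fin m) (Fin m) ℝ) := .restrictScalars ℚ ℝ _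
  letI : SeminormedRing (Matrix (Fin m) (Fin m) ℂ) := Matrix.linftyOpSemiNormedRing
  letI : NormedRing (Matrix (Fin m) (Fin m) ℂ) := Matrix.linftyOpNormedRing
  letI : NormedAlgebra ℝ (Matrix (Fin m) (Fin m) ℂ) := Matrix.linftyOpNormedAlgebra
  have hcont : Continuous fun N : Matrix (Fin m) (Fin m) ℝ =>
      (Complex.ofRealHom.mapMatrix : Matrix (Fin m) (Fin m) ℝ →+* Matrix (Fin m) (Fin m) ℂ) N :=
    Continuous.matrix_map continuous_id Complex.continuous_ofReal
  exact NormedSpace.map_exp (Complex.ofRealHom.mapMatrix :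
    Matrix (Fin m) (Fin m) ℝ →+* Matrix (Fin m) (Fin m) ℂ) hcont M

theorem linear_rnn_exponential_memory_limitation
    (m : ℕ) (W : Matrix (Fin m) (Fin m) ℝ) (c U : Fin m → ℝ)
    (lam p : ℝ) (hlam : 0 < lam) (hp : 1 < p)
    (hspec : ∀ μ : ℂ, μ ∈ spectrum ℂ (W.map (Complex.ofReal)) → μ.re ≤ -lam)
    (ρhat ρ : ℝ → ℝ)
    (hρhat : ∀ s : ℝ, ρhat s = dotProduct c ((NormedSpace.exp (s • W)).mulVec U))
    (hρ : ∀ s : ℝ, ρ s = (1 + s) ^ (-p)) :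
    (∃ C : ℝ, 0 < C ∧ ∀ s : ℝ, 0 ≤ s → |ρhat s| ≤ C * Real.exp (-lam * s / 2)) ∧
    (¬ (∀ s : ℝ, 0 ≤ s → ρ s = ρhat s) →
      ¬ BddAbove {v : ℝ | ∃ s : ℝ, 0 ≤ s ∧
          v = Real.exp (lam * s / 4) * |ρ s - ρhat s|}) := by
  -- Part 1: exponential decay of the linear RNN memory function
  have part1 : ∃ C : ℝ, 0 < C ∧ ∀ s : ℝ, 0 ≤ s → |ρhat s| ≤ C * Real.exp (-lam * s / 2) := by
    obtain ⟨C₀, hC₀, hent⟩ :=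
      matrix_exp_entry_decay m (W.map Complex.ofReal) lam hlam hspec
    refine ⟨C₀ * ((∑ i, |c i|) * (∑ j, |U j|)) + 1, by positivity, fun s hs => ?_⟩
    have hentry : ∀ i j, |(NormedSpace.exp (s • W)) i j| ≤ C₀ * Real.exp (-lam * s / 2) := by
      intro i j
      have hsm : (s • W).map Complex.ofReal = s • (W.map Complex.ofReal) := by
        ext i j
        simp [Matrix.map_apply, Complex.ofReal_mul, Complex.real_smul]
      have h1 : ((NormedSpace.exp (s • W)).map Complex.ofReal) i j
          = (NormedSpace.exp (s • (W.map Complex.ofReal))) i j := by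
        rw [exp_map_ofReal, hsm]
      have h2 : |(NormedSpace.exp (s • W)) i j|
          = ‖((NormedSpace.exp (s • W)).map Complex.ofReal) i j‖ := by
        rw [Matrix.map_apply]
        exact (RCLike.norm_ofReal (K := ℂ) _).symm
      rw [h2, h1]
      exact hent s hs i j
    rw [hρhat]
    have hmv : ∀ i, |(NormedSpace.exp (s • W)).mulVec U i|
        ≤ (C₀ * Real.exp (-lam * s / 2)) * ∑ j, |U j| := by
      intro i
      calc |(NormedSpace.exp (s • W)).mulVec U i|
          = |∑ j, (NormedSpace.exp (s • W)) i j * U j| := by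
            rfl
        _ ≤ ∑ j, |(NormedSpace.exp (s • W)) i j * U j| := Finset.abs_sum_le_sum_abs _ _
        _ ≤ ∑ j, (C₀ * Real.exp (-lam * s / 2)) * |U j| := by
            refine Finset.sum_le_sum fun j _ => ?_
            rw [abs_mul]
            exact mul_le_mul_of_nonneg_right (hentry i j) (abs_nonneg _)
        _ = (C₀ * Real.exp (-lam * s / 2)) * ∑ j, |U j| := by rw [Finset.mul_sum]
    calc |dotProduct c ((NormedSpace.exp (s • W)).mulVec U)|
        = |∑ i, c i * (NormedSpace.exp (s • W)).mulVec U i| := rfl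
      _ ≤ ∑ i, |c i * (NormedSpace.exp (s • W)).mulVec U i| := Finset.abs_sum_le_sum_abs _ _
      _ ≤ ∑ i, |c i| * ((C₀ * Real.exp (-lam * s / 2)) * ∑ j, |U j|) := by
          refine Finset.sum_le_sum fun i _ => ?_
          rw [abs_mul]
          exact mul_le_mul_of_nonneg_left (hmv i) (abs_nonneg _)
      _ = (C₀ * ((∑ i, |c i|) * (∑ j, |U j|))) * Real.exp (-lam * s / 2) := by
          rw [← Finset.sum_mul]; ring
      _ ≤ (C₀ * ((∑ i, |c i|) * (∑ j, |U j|)) + 1) * Real.exp (-lam * s / 2) := by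
          have := (Real.exp_pos (-lam * s / 2)).le
          nlinarith
  refine ⟨part1, fun _ hbdd => ?_⟩
  obtain ⟨C, hCpos, hC⟩ := part1
  obtain ⟨M, hM⟩ := hbdd
  have hMlb : ∀ s : ℝ, 0 ≤ s → Real.exp (lam * s / 4) * |ρ s - ρhat s| ≤ M := by
    intro s hs
    exact hM ⟨s, hs, rfl⟩
  -- the weighted polynomial tail tends to infinity
  have htend : Filter.Tendsto (fun s : ℝ => Real.exp (lam * s / 4) * (1 + s) ^ (-p))
      Filter.atTop Filter.atTop := by
    have h0 : Filter.Tendsto (fun u : ℝ => Real.exp u / u ^ p) Filter.atTop Filter.atTop :=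
      tendsto_exp_div_rpow_atTop p
    have hcomp : Filter.Tendsto (fun s : ℝ => lam / 8 * (1 + s)) Filter.atTop Filter.atTop := by
      apply Filter.Tendsto.const_mul_atTop (by positivity : (0:ℝ) < lam / 8)
      exact Filter.tendsto_atTop_add_const_left _ 1 Filter.tendsto_id
    have h1 : Filter.Tendsto
        (fun s : ℝ => (lam / 8) ^ p * (Real.exp (lam / 8 * (1 + s)) / (lam / 8 * (1 + s)) ^ p))
        Filter.atTop Filter.atTop :=
      Filter.Tendsto.const_mul_atTop (by positivity) (h0.comp hcomp)
    refine Filter.tendsto_atTop_mono' Filter.atTop ?_ h1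
    filter_upwards [Filter.eventually_ge_atTop (1 : ℝ)] with s hs1
    have h2p : (0:ℝ) < 1 + s := by linarith
    have hQ : (0:ℝ) < (1 + s) ^ p := Real.rpow_pos_of_pos h2p p
    have hE : Real.exp (lam / 8 * (1 + s)) ≤ Real.exp (lam * s / 4) := by
      apply Real.exp_le_exp.mpr
      nlinarith
    calc (lam / 8) ^ p * (Real.exp (lam / 8 * (1 + s)) / (lam / 8 * (1 + s)) ^ p)
        = Real.exp (lam / 8 * (1 + s)) / (1 + s) ^ p := by
          rw [Real.mul_rpow (by positivity) h2p.le]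
          have hlp : (0:ℝ) < (lam / 8) ^ p := Real.rpow_pos_of_pos (by positivity) p
          field_simp
      _ ≤ Real.exp (lam * s / 4) / (1 + s) ^ p := by gcongr
      _ = Real.exp (lam * s / 4) * (1 + s) ^ (-p) := by
          rw [Real.rpow_neg h2p.le, div_eq_mul_inv]
  obtain ⟨s, hgt, hs0⟩ :=
    ((htend.eventually_gt_atTop (M + C)).and (Filter.eventually_ge_atTop (0:ℝ))).exists
  have h1 : Real.exp (lam * s / 4) * |ρ s - ρhat s| ≤ M := hMlb s hs0
  have h2p : (0:ℝ) < 1 + s := by linarith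
  have hρs : ρ s = (1 + s) ^ (-p) := hρ s
  have hρnn : 0 ≤ ρ s := by rw [hρs]; positivity
  have h2 : ρ s - |ρhat s| ≤ |ρ s - ρhat s| := by
    have := abs_sub_abs_le_abs_sub (ρ s) (ρhat s)
    rw [abs_of_nonneg hρnn] at this
    exact this
  have h3 : |ρhat s| ≤ C * Real.exp (-lam * s / 2) := hC s hs0
  have hexps : Real.exp (lam * s / 4) * Real.exp (-lam * s / 2) = Real.exp (-lam * s / 4) := by
    rw [← Real.exp_add]; ring_nf
  have hexple : Real.exp (-lam * s / 4) ≤ 1 := by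
    rw [Real.exp_le_one_iff]
    nlinarith
  have hexpnn : (0:ℝ) ≤ Real.exp (lam * s / 4) := (Real.exp_pos _).le
  have e1 : Real.exp (lam * s / 4) * ρ s
      ≤ Real.exp (lam * s / 4) * |ρ s - ρhat s| + Real.exp (lam * s / 4) * |ρhat s| := by
    have := mul_le_mul_of_nonneg_left h2 hexpnn
    nlinarith [abs_nonneg (ρhat s)]
  have e2 : Real.exp (lam * s / 4) * |ρhat s| ≤ C * Real.exp (-lam * s / 4) := by
    calc Real.exp (lam * s / 4) * |ρhat s|
        ≤ Real.exp (lam * s / 4) * (C * Real.exp (-lam * s / 2)) :=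
          mul_le_mul_of_nonneg_left h3 hexpnn
      _ = C * (Real.exp (lam * s / 4) * Real.exp (-lam * s / 2)) := by ring
      _ = C * Real.exp (-lam * s / 4) := by rw [hexps]
  have hfinal : Real.exp (lam * s / 4) * ρ s ≤ M + C := by
    have e3 : C * Real.exp (-lam * s / 4) ≤ C := by nlinarith
    linarith
  rw [hρs] at hfinal
  exact absurd hfinal (not_le.mpr hgt)
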